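/- The subsequence (ỹ_{2k})_{k∈ℕ} is strictly increasing. -/
import Mathlib


noncomputable def c : ℝ := 4 / (9 - Real.sqrt 5)
noncomputable def φ : ℝ := (1 + Real.sqrt 5) / 2

lemma sqrt5_lt_3 : Real.sqrt 5 < 3 := by
  nlinarith [Real.sq_sqrt (by norm_num : (5:ℝ) ≥ 0), Real.sqrt_nonneg 5]

lemma sqrt5_gt_1 : (1:ℝ) < Real.sqrt 5 := by
  nlinarith [Real.sq_sqrt (by norm_num : (5:ℝ) ≥ 0), Real.sqrt_nonneg 5]

lemma c_pos : 0 < c := by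
  have := sqrt5_lt_3
  unfold c
  apply div_pos <;> linarith

lemma φ_gt_1 : 1 < φ := by
  have := sqrt5_gt_1
  unfold φ
  linarith

theorem stmt4 (y : ℕ → ℝ) (h1 : y 1 = c) (h2 : y 2 = c / 2)
    (hrec : ∀ n : ℕ, 1 ≤ n →
      2 * y (n + 1) = 2 * y n + c * (-1 : ℝ) ^ n * φ ^ ((1 : ℤ) - (n : ℤ))) :
    StrictMonoOn (fun k : ℕ => y (2 * k)) {k : ℕ | 1 ≤ k} := by
  have hφ1 : 1 < φ := φ_gt_1
  have hφ0 : (0:ℝ) < φ := by linarith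
  have hφne : φ ≠ 0 := ne_of_gt hφ0
  have step : ∀ k : ℕ, 1 ≤ k → y (2 * k) < y (2 * (k + 1)) := by
    intro k hk
    have ha := hrec (2 * k) (by omega)
    have hb := hrec (2 * k + 1) (by omega)
    have e1 : ((-1:ℝ)) ^ (2 * k) = 1 := by
      rw [pow_mul]; norm_num
    have e2 : ((-1:ℝ)) ^ (2 * k + 1) = -1 := by
      rw [pow_succ, e1]; norm_num
    set m : ℤ := ((2 * k : ℕ) : ℤ) with hm
    have ea : (1 : ℤ) - ((2 * k : ℕ) : ℤ) = 1 - m := by rw [hm]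
    have eb : (1 : ℤ) - ((2 * k + 1 : ℕ) : ℤ) = -m := by push_cast [hm]; ring
    rw [e1, ea] at ha
    rw [e2, eb] at hb
    have z1 : φ ^ ((1:ℤ) - m) = φ / φ ^ m := by
      rw [zpow_sub₀ hφne, zpow_one]
    have z2 : φ ^ (-m : ℤ) = 1 / φ ^ m := by
      rw [zpow_neg, one_div]
    have hpm : (0:ℝ) < φ ^ m := zpow_pos hφ0 m
    rw [z1] at ha
    rw [z2] at hb
    have key : 2 * y (2 * (k + 1)) = 2 * y (2 * k) + c * (φ - 1) / φ ^ m := by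
      have : 2 * (k + 1) = 2 * k + 1 + 1 := by ring
      rw [this, hb, ha]
      field_simp
      ring
    have hc := c_pos
    have : 0 < c * (φ - 1) / φ ^ m := by
      apply div_pos _ hpm
      apply mul_pos hc
      linarith
    linarith
  have chain : ∀ a : ℕ, 1 ≤ a → ∀ d : ℕ, y (2 * a) < y (2 * (a + d + 1)) := by
    intro a ha d
    induction d with
    | zero => exact step a ha
    | succ n ih =>
      have := step (a + n + 1) (by omega)
      calc y (2 * a) < y (2 * (a + n + 1)) := ih
        _ < y (2 * (a + (n + 1) + 1)) := by
            have h := step (a + n + 1) (by omega)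
            convert h using 3 <;> omega
  intro a ha b hb hab
  simp only [Set.mem_setOf_eq] at ha hb
  have : b = a + (b - a - 1) + 1 := by omega
  rw [this]
  exact chain a ha (b - a - 1)
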